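/- There exists x₀ > 0 such that for all 0 < x < x₀, the sum Σ_{n≥1} λ(n)/(e^{nπx}+1) is negative; moreover this sum tends to −∞ as x ↓ 0. -/

import Mathlib

open Real Filter

open ArithmeticFunction hiding liouville
open scoped ArithmeticFunction.Omega ArithmeticFunction.zeta

/-- The Liouville function `λ(n) = (-1)^Ω(n)`. -/
def liouville (n : ℕ) : ℤ := (-1) ^ n.primeFactorsList.length


lemma liouville_eq (n : ℕ) : liouville n = (-1) ^ (Ω n) := by
  rw [liouville, cardFactors_apply]

/-- λ as an arithmetic function. -/
def lamAF : ArithmeticFunction ℤ := ⟨fun n => if n = 0 then 0 else liouville n, if_pos rfl⟩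

lemma lamAF_apply {n : ℕ} (hn : n ≠ 0) : lamAF n = liouville n := if_neg hn

/-- square indicator. -/
def sqAF : ArithmeticFunction ℤ := ⟨fun n => if IsSquare n ∧ n ≠ 0 then 1 else 0,
  by simp⟩

lemma sqAF_apply (n : ℕ) : sqAF n = if IsSquare n ∧ n ≠ 0 then 1 else 0 := rfl

lemma nat_isSquare_iff {n : ℕ} (hn : n ≠ 0) :
    IsSquare n ↔ ∀ p, Even (n.factorization p) := by
  constructor
  · rintro ⟨r, rfl⟩
    have hr : r ≠ 0 := by rintro rfl; simp at hn
    intro p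
    rw [Nat.factorization_mul hr hr]
    exact ⟨r.factorization p, rfl⟩
  · intro h
    refine ⟨n.factorization.prod fun p k => p ^ (k / 2), ?_⟩
    rw [← Finsupp.prod_mul]
    conv_lhs => rw [← Nat.factorization_prod_pow_eq_self hn]
    refine Finsupp.prod_congr fun p hp => ?_
    rw [← pow_add]
    congr 1
    obtain ⟨c, hc⟩ := h p
    omega

lemma factorization_disj {m n : ℕ} (hmn : m.Coprime n) (p : ℕ) :
    m.factorization p = 0 ∨ n.factorization p = 0 := by
  by_contra h
  push_neg at h
  have hp : p.Prime := by
    by_contra hp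
    exact h.1 (Nat.factorization_eq_zero_of_not_prime m hp)
  have h1 : p ∣ m := Nat.dvd_of_factorization_pos h.1
  have h2 : p ∣ n := Nat.dvd_of_factorization_pos h.2
  exact hp.ne_one (Nat.eq_one_of_dvd_coprimes hmn h1 h2)

lemma isMult_lamAF : lamAF.IsMultiplicative := by
  constructor
  · rw [lamAF_apply one_ne_zero, liouville_eq]; simp
  · intro m n hmn
    rcases eq_or_ne m 0 with rfl | hm
    · simp [lamAF]
    rcases eq_or_ne n 0 with rfl | hn
    · simp [lamAF]
    rw [lamAF_apply (mul_ne_zero hm hn), lamAF_apply hm, lamAF_apply hn,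
      liouville_eq, liouville_eq, liouville_eq, cardFactors_mul hm hn, pow_add]

lemma isMult_sqAF : sqAF.IsMultiplicative := by
  constructor
  · rw [sqAF_apply, if_pos ⟨IsSquare.one, one_ne_zero⟩]
  · intro m n hmn
    rcases eq_or_ne m 0 with rfl | hm
    · simp [sqAF_apply]
    rcases eq_or_ne n 0 with rfl | hn
    · simp [sqAF_apply]
    rw [sqAF_apply, sqAF_apply, sqAF_apply]
    have key : IsSquare (m * n) ↔ IsSquare m ∧ IsSquare n := by
      rw [nat_isSquare_iff (mul_ne_zero hm hn), nat_isSquare_iff hm, nat_isSquare_iff hn]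
      have hfact : ∀ p, (m * n).factorization p = m.factorization p + n.factorization p := by
        intro p; rw [Nat.factorization_mul hm hn]; rfl
      constructor
      · intro h
        constructor <;> intro p <;> have hp := h p <;> rw [hfact p] at hp <;>
          rcases factorization_disj hmn p with h0 | h0 <;> simp [h0] at hp ⊢ <;> exact hp
      · rintro ⟨h1, h2⟩ p
        rw [hfact p]
        exact (h1 p).add (h2 p)
    by_cases h1 : IsSquare m <;> by_cases h2 : IsSquare n <;>
      simp [h1, h2, hm, hn, key, mul_ne_zero hm hn]

lemma zeta_mul_lam : (↑ζ * lamAF : ArithmeticFunction ℤ) = sqAF := by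
  rw [ArithmeticFunction.IsMultiplicative.eq_iff_eq_on_prime_powers _ (isMultiplicative_zeta.natCast.mul isMult_lamAF) _ isMult_sqAF]
  intro p k hp
  rw [coe_zeta_mul_apply, Nat.sum_divisors_prime_pow hp]
  have hsum : ∀ i : ℕ, lamAF (p ^ i) = (-1) ^ i := fun i => by
    rw [lamAF_apply (pow_ne_zero _ hp.pos.ne'), liouville_eq, cardFactors_apply_prime_pow hp]
  simp only [hsum]
  rw [neg_one_geom_sum]
  have hsq : IsSquare (p ^ k) ↔ Even k := by
    rw [nat_isSquare_iff (pow_ne_zero _ hp.pos.ne')]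
    constructor
    · intro h
      have := h p
      rwa [hp.factorization_pow, Finsupp.single_apply, if_pos rfl] at this
    · rintro ⟨c, rfl⟩ q
      rw [hp.factorization_pow, Finsupp.single_apply]
      split
      · exact ⟨c, rfl⟩
      · exact Even.zero
  by_cases hk : Even k <;>
    simp [hk, hsq, Nat.even_add_one, pow_ne_zero _ hp.pos.ne', sqAF_apply, hp.ne_zero]

/-- The key divisor-sum identity. -/
lemma liouville_divisor_sum {n : ℕ} (hn : n ≠ 0) :
    ∑ d ∈ n.divisors, liouville d = if IsSquare n then 1 else 0 := by
  have := congrArg (fun f : ArithmeticFunction ℤ => f n) zeta_mul_lam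
  simp only [coe_zeta_mul_apply] at this
  rw [Finset.sum_congr rfl fun d hd => (lamAF_apply (Nat.pos_of_mem_divisors hd).ne').symm, this,
    sqAF_apply]
  simp [hn]

section Part2
open Real

lemma geom_hasSum {t : ℝ} (ht : 0 < t) :
    HasSum (fun k : ℕ => Real.exp (-(((k : ℝ) + 1) * t)))
      (Real.exp (-t) / (1 - Real.exp (-t))) := by
  have h0 : (0:ℝ) ≤ Real.exp (-t) := (Real.exp_pos _).le
  have h1 : Real.exp (-t) < 1 := Real.exp_lt_one_iff.mpr (by linarith)
  have h := (hasSum_geometric_of_lt_one h0 h1).mul_left (Real.exp (-t))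
  rw [div_eq_mul_inv]
  have heq : (fun k : ℕ => Real.exp (-(((k : ℝ) + 1) * t)))
      = fun k : ℕ => Real.exp (-t) * Real.exp (-t) ^ k := by
    funext k
    rw [← Real.exp_nat_mul, ← Real.exp_add]
    congr 1
    push_cast
    ring
  rw [heq]
  exact h

lemma summable_geom {t : ℝ} (ht : 0 < t) :
    Summable (fun k : ℕ => Real.exp (-(((k : ℝ) + 1) * t))) :=
  (geom_hasSum ht).summable

set_option maxHeartbeats 1000000 in
lemma lambert_hasSum {y : ℝ} (hy : 0 < y) :
    HasSum (fun n : ℕ => (liouville (n + 1) : ℝ) *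
        (Real.exp (-(((n : ℝ) + 1) * y)) / (1 - Real.exp (-(((n : ℝ) + 1) * y)))))
      (∑' j : ℕ, Real.exp (-(((j : ℝ) + 1) ^ 2 * y))) := by
  set f : ℕ × ℕ → ℝ := fun p =>
    (liouville (p.1 + 1) : ℝ) * Real.exp (-((((p.1 + 1) * (p.2 + 1) : ℕ)) : ℝ) * y) with hf_def
  have hlam_abs : ∀ n : ℕ, |(liouville n : ℝ)| = 1 := by
    intro n
    rw [liouville_eq]
    push_cast
    rw [abs_pow, abs_neg, abs_one, one_pow]
  have habs : ∀ p : ℕ × ℕ, ‖f p‖ ≤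
      Real.exp (-(((p.1 : ℝ) + 1) * (y / 2))) * Real.exp (-(((p.2 : ℝ) + 1) * (y / 2))) := by
    intro p
    simp only [hf_def, Real.norm_eq_abs, abs_mul, hlam_abs, one_mul, Real.abs_exp,
      ← Real.exp_add]
    apply Real.exp_le_exp.mpr
    push_cast
    have ha := p.1.cast_nonneg (α := ℝ)
    have hb := p.2.cast_nonneg (α := ℝ)
    nlinarith [mul_nonneg (mul_nonneg ha hb) hy.le, mul_nonneg ha hy.le, mul_nonneg hb hy.le]
  have hsummable : Summable f := by
    refine Summable.of_norm_bounded ?_ habs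
    exact Summable.mul_of_nonneg (summable_geom (by linarith)) (summable_geom (by linarith))
      (fun _ => (Real.exp_pos _).le) (fun _ => (Real.exp_pos _).le)
  have hT : HasSum f (∑' p, f p) := hsummable.hasSum
  -- row sums
  have hrow : ∀ n : ℕ, HasSum (fun k => f (n, k))
      ((liouville (n + 1) : ℝ) *
        (Real.exp (-(((n : ℝ) + 1) * y)) / (1 - Real.exp (-(((n : ℝ) + 1) * y))))) := by
    intro n
    have h := (geom_hasSum (t := ((n : ℝ) + 1) * y) (by positivity)).mul_left
      ((liouville (n + 1) : ℝ))
    have heq : (fun k => f (n, k)) = fun k : ℕ =>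
        (liouville (n + 1) : ℝ) * Real.exp (-(((k : ℝ) + 1) * (((n : ℝ) + 1) * y))) := by
      funext k
      simp only [hf_def]
      congr 1
      congr 1
      push_cast
      ring
    rw [heq]
    exact h
  have hLHS := HasSum.prod_fiberwise hT hrow
  -- fiberwise along products
  have hfib := hT.tsum_fiberwise (fun p : ℕ × ℕ => (p.1 + 1) * (p.2 + 1))
  -- identify the fibers
  have hfiber : ∀ m : ℕ,
      (∑' p : (fun p : ℕ × ℕ => (p.1 + 1) * (p.2 + 1)) ⁻¹' {m}, f p)
        = if IsSquare m ∧ m ≠ 0 then Real.exp (-(m : ℝ) * y) else 0 := by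
    intro m
    rcases eq_or_ne m 0 with rfl | hm
    · rw [if_neg (by simp)]
      have : IsEmpty ((fun p : ℕ × ℕ => (p.1 + 1) * (p.2 + 1)) ⁻¹' {(0:ℕ)}) := by
        constructor
        rintro ⟨p, hp⟩
        simp only [Set.mem_preimage, Set.mem_singleton_iff, Nat.mul_eq_zero] at hp
        omega
      exact tsum_empty
    · have hset : (fun p : ℕ × ℕ => (p.1 + 1) * (p.2 + 1)) ⁻¹' {m}
          = ↑(m.divisorsAntidiagonal.image fun q : ℕ × ℕ => (q.1 - 1, q.2 - 1)) := by
        ext p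
        simp only [Set.mem_preimage, Set.mem_singleton_iff, Finset.coe_image, Set.mem_image,
          Finset.mem_coe, Nat.mem_divisorsAntidiagonal]
        constructor
        · intro hp
          exact ⟨(p.1 + 1, p.2 + 1), ⟨hp, hm⟩, by simp⟩
        · rintro ⟨q, ⟨hq, -⟩, rfl⟩
          have h1 : q.1 ≠ 0 := by rintro h; rw [h] at hq; simp at hq; omega
          have h2 : q.2 ≠ 0 := by rintro h; rw [h] at hq; simp at hq; omega
          simp only
          rw [Nat.sub_add_cancel (Nat.one_le_iff_ne_zero.mpr h1),
            Nat.sub_add_cancel (Nat.one_le_iff_ne_zero.mpr h2)]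
          exact hq
      rw [hset, Finset.tsum_subtype']
      rw [Finset.sum_image]
      · have hterm : ∀ q ∈ m.divisorsAntidiagonal,
            f (q.1 - 1, q.2 - 1) = (liouville q.1 : ℝ) * Real.exp (-(m : ℝ) * y) := by
          intro q hq
          rw [Nat.mem_divisorsAntidiagonal] at hq
          have h1 : q.1 ≠ 0 := by rintro h; rw [h] at hq; simp at hq; exact hm hq.1.symm
          have h2 : q.2 ≠ 0 := by rintro h; rw [h] at hq; simp at hq; exact hm hq.1.symm
          simp only [hf_def]
          rw [Nat.sub_add_cancel (Nat.one_le_iff_ne_zero.mpr h1),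
            Nat.sub_add_cancel (Nat.one_le_iff_ne_zero.mpr h2), hq.1]
        rw [Finset.sum_congr rfl hterm, ← Finset.sum_mul]
        have : ∑ q ∈ m.divisorsAntidiagonal, (liouville q.1 : ℝ)
            = ((∑ d ∈ m.divisors, liouville d : ℤ) : ℝ) := by
          push_cast
          exact Nat.sum_divisorsAntidiagonal (fun d e => (liouville d : ℝ))
        rw [this, liouville_divisor_sum hm]
        by_cases hsq : IsSquare m
        · rw [if_pos hsq, if_pos ⟨hsq, hm⟩]
          push_cast
          ring
        · rw [if_neg hsq, if_neg (fun hc => hsq hc.1)]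
          push_cast
          ring
      · intro q hq q' hq' hqq
        rw [Finset.mem_coe, Nat.mem_divisorsAntidiagonal] at hq hq'
        have h1 : q.1 ≠ 0 := by rintro h; rw [h] at hq; simp at hq; exact hm hq.1.symm
        have h2 : q.2 ≠ 0 := by rintro h; rw [h] at hq; simp at hq; exact hm hq.1.symm
        have h1' : q'.1 ≠ 0 := by rintro h; rw [h] at hq'; simp at hq'; exact hm hq'.1.symm
        have h2' : q'.2 ≠ 0 := by rintro h; rw [h] at hq'; simp at hq'; exact hm hq'.1.symm
        have e1 : q.1 - 1 = q'.1 - 1 := congrArg Prod.fst hqq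
        have e2 : q.2 - 1 = q'.2 - 1 := congrArg Prod.snd hqq
        exact Prod.ext_iff.mpr ⟨by omega, by omega⟩
  rw [funext hfiber] at hfib
  -- reindex the squares
  have hinj : Function.Injective (fun j : ℕ => ((j + 1) ^ 2 : ℕ)) := by
    intro a b hab
    simp only at hab
    nlinarith [hab]
  have hzero : ∀ m ∉ Set.range (fun j : ℕ => ((j + 1) ^ 2 : ℕ)),
      (if IsSquare m ∧ m ≠ 0 then Real.exp (-(m : ℝ) * y) else 0) = 0 := by
    intro m hmr
    rw [if_neg]
    rintro ⟨⟨r, hr⟩, hm0⟩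
    have hr0 : r ≠ 0 := by rintro rfl; simp at hr; exact hm0 hr
    exact hmr ⟨r - 1, by
      simp only
      rw [Nat.sub_add_cancel (Nat.one_le_iff_ne_zero.mpr hr0)]
      rw [hr]; ring⟩
  have hRHS := (hinj.hasSum_iff hzero).mpr hfib
  have hcomp : ((fun m : ℕ => if IsSquare m ∧ m ≠ 0 then Real.exp (-(m : ℝ) * y) else 0)
      ∘ (fun j : ℕ => ((j + 1) ^ 2 : ℕ))) = fun j : ℕ => Real.exp (-(((j : ℝ) + 1) ^ 2 * y)) := by
    funext j
    simp only [Function.comp_apply]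
    rw [if_pos ⟨⟨j + 1, by ring⟩, by positivity⟩]
    congr 1
    push_cast
    ring
  rw [hcomp] at hRHS
  rw [hRHS.tsum_eq]
  exact hLHS

end Part2

section Part3
open Real MeasureTheory Set Filter Topology

lemma gauss_antitone {y : ℝ} (hy : 0 < y) {s : Set ℝ} (hs : s ⊆ Ici 0) :
    AntitoneOn (fun t : ℝ => Real.exp (-y * t ^ 2)) s := by
  intro a ha b hb hab
  have ha0 : (0 : ℝ) ≤ a := hs ha
  apply Real.exp_le_exp.mpr
  nlinarith [mul_nonneg (mul_nonneg hy.le (sub_nonneg.2 hab)) (add_nonneg ha0 (ha0.trans hab))]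

lemma summable_theta {y : ℝ} (hy : 0 < y) :
    Summable (fun j : ℕ => Real.exp (-(((j : ℝ) + 1) ^ 2 * y))) := by
  refine Summable.of_nonneg_of_le (fun _ => (Real.exp_pos _).le) (fun j => ?_)
    (summable_geom hy)
  apply Real.exp_le_exp.mpr
  have hj : (1 : ℝ) ≤ (j : ℝ) + 1 := by linarith [j.cast_nonneg (α := ℝ)]
  nlinarith [mul_nonneg (mul_nonneg (by linarith : (0:ℝ) ≤ (j:ℝ) + 1) hy.le) (sub_nonneg.2 hj)]

lemma tsum_theta_nonneg (y : ℝ) : 0 ≤ ∑' j : ℕ, Real.exp (-(((j : ℝ) + 1) ^ 2 * y)) :=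
  tsum_nonneg fun _ => (Real.exp_pos _).le

lemma theta_upper {y : ℝ} (hy : 0 < y) :
    (∑' j : ℕ, Real.exp (-(((j : ℝ) + 1) ^ 2 * y))) ≤ Real.sqrt (π / y) / 2 := by
  have hsum := (summable_theta hy).hasSum
  refine le_of_tendsto hsum.tendsto_sum_nat (Filter.Eventually.of_forall fun a => ?_)
  have h2 := AntitoneOn.sum_le_integral (x₀ := (0 : ℝ)) (a := a)
    (f := fun t : ℝ => Real.exp (-y * t ^ 2)) (gauss_antitone hy (fun t ht => ht.1))
  simp only [zero_add, Nat.cast_add, Nat.cast_one] at h2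
  calc (∑ i ∈ Finset.range a, Real.exp (-(((i : ℝ) + 1) ^ 2 * y)))
      = ∑ i ∈ Finset.range a, Real.exp (-y * (((i : ℕ) : ℝ) + 1) ^ 2) := by
        refine Finset.sum_congr rfl fun i _ => ?_
        congr 1
        ring
    _ ≤ ∫ t in (0 : ℝ)..((a : ℕ) : ℝ), Real.exp (-y * t ^ 2) := by
        refine le_trans (le_of_eq ?_) h2
        refine Finset.sum_congr rfl fun i _ => ?_
        norm_num
    _ ≤ ∫ t in Ioi (0 : ℝ), Real.exp (-y * t ^ 2) := by
        rw [intervalIntegral.integral_of_le (by positivity)]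
        apply setIntegral_mono_set ((integrable_exp_neg_mul_sq hy).integrableOn)
        · exact Filter.Eventually.of_forall fun t => (Real.exp_pos _).le
        · exact (Ioc_subset_Ioi_self).eventuallyLE
    _ = Real.sqrt (π / y) / 2 := integral_gaussian_Ioi y

lemma theta_lower {y : ℝ} (hy : 0 < y) :
    Real.sqrt (π / y) / 2 - 1 ≤ ∑' j : ℕ, Real.exp (-(((j : ℝ) + 1) ^ 2 * y)) := by
  rw [sub_le_iff_le_add, ← integral_gaussian_Ioi y]
  have htend : Tendsto (fun n : ℕ => ∫ t in (0 : ℝ)..(((n : ℕ) : ℝ)), Real.exp (-y * t ^ 2))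
      atTop (𝓝 (∫ t in Ioi (0 : ℝ), Real.exp (-y * t ^ 2))) :=
    intervalIntegral_tendsto_integral_Ioi 0 ((integrable_exp_neg_mul_sq hy).integrableOn)
      tendsto_natCast_atTop_atTop
  refine le_of_tendsto htend (Filter.Eventually.of_forall fun n => ?_)
  have h2 := AntitoneOn.integral_le_sum (x₀ := (0 : ℝ)) (a := n)
    (f := fun t : ℝ => Real.exp (-y * t ^ 2)) (gauss_antitone hy (fun t ht => ht.1))
  simp only [zero_add] at h2
  refine le_trans h2 ?_
  rcases Nat.eq_zero_or_pos n with rfl | hn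
  · simp only [Finset.range_zero, Finset.sum_empty]
    exact add_nonneg (tsum_theta_nonneg y) zero_le_one
  obtain ⟨m, rfl⟩ : ∃ m, n = m + 1 := ⟨n - 1, by omega⟩
  rw [Finset.sum_range_succ']
  have h1 : Real.exp (-y * ((0 : ℕ) : ℝ) ^ 2) = 1 := by norm_num
  rw [h1]
  gcongr
  calc (∑ i ∈ Finset.range m, Real.exp (-y * (((i + 1 : ℕ) : ℝ)) ^ 2))
      = ∑ i ∈ Finset.range m, Real.exp (-(((i : ℝ) + 1) ^ 2 * y)) := by
        refine Finset.sum_congr rfl fun i _ => ?_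
        congr 1
        push_cast
        ring
    _ ≤ _ := Summable.sum_le_tsum _ (fun _ _ => (Real.exp_pos _).le) (summable_theta hy)
end Part3

section Part4
open Real Filter Set Topology

lemma term_id {t : ℝ} (ht : 0 < t) :
    1 / (Real.exp t + 1) = Real.exp (-t) / (1 - Real.exp (-t))
      - 2 * (Real.exp (-(2 * t)) / (1 - Real.exp (-(2 * t)))) := by
  have hu0 : 0 < Real.exp (-t) := Real.exp_pos _
  have hu1 : Real.exp (-t) < 1 := Real.exp_lt_one_iff.mpr (by linarith)
  have h2 : Real.exp (-(2 * t)) = Real.exp (-t) * Real.exp (-t) := by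
    rw [← Real.exp_add]; ring_nf
  have het : Real.exp t = (Real.exp (-t))⁻¹ := by
    rw [← Real.exp_neg, neg_neg]
  set u := Real.exp (-t) with hu
  rw [h2, het]
  have h1u : 1 - u ≠ 0 := by intro h; nlinarith
  have h1u' : 1 + u ≠ 0 := by positivity
  have h1uu : 1 - u * u ≠ 0 := by intro h; nlinarith
  have hui : u⁻¹ + 1 ≠ 0 := by positivity
  have h1uu2 : 1 - u ^ 2 ≠ 0 := by intro h; nlinarith
  field_simp
  ring

/-- The theta-type sum. -/
noncomputable def thetaS (y : ℝ) : ℝ := ∑' j : ℕ, Real.exp (-(((j : ℝ) + 1) ^ 2 * y))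

lemma F_hasSum {x : ℝ} (hx : 0 < x) :
    HasSum (fun n : ℕ => (liouville (n + 1) : ℝ) / (Real.exp (((n : ℝ) + 1) * π * x) + 1))
      (thetaS (π * x) - 2 * thetaS (2 * (π * x))) := by
  have hpx : 0 < π * x := by positivity
  have hA := lambert_hasSum hpx
  have hB := lambert_hasSum (y := 2 * (π * x)) (by positivity)
  have h := hA.sub (hB.mul_left 2)
  have heq : (fun n : ℕ => (liouville (n + 1) : ℝ) / (Real.exp (((n : ℝ) + 1) * π * x) + 1))
      = fun n : ℕ =>
        (liouville (n + 1) : ℝ) * (Real.exp (-(((n : ℝ) + 1) * (π * x)))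
          / (1 - Real.exp (-(((n : ℝ) + 1) * (π * x)))))
        - 2 * ((liouville (n + 1) : ℝ) * (Real.exp (-(((n : ℝ) + 1) * (2 * (π * x))))
          / (1 - Real.exp (-(((n : ℝ) + 1) * (2 * (π * x))))))) := by
    funext n
    have ht : 0 < ((n : ℝ) + 1) * (π * x) := by positivity
    have hti := term_id ht
    have e1 : ((n : ℝ) + 1) * π * x = ((n : ℝ) + 1) * (π * x) := by ring
    have e2 : -(((n : ℝ) + 1) * (2 * (π * x))) = -(2 * (((n : ℝ) + 1) * (π * x))) := by ring
    rw [e1, e2, div_eq_mul_one_div ((liouville (n + 1) : ℝ)), hti]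
    ring
  rw [heq]
  exact h

lemma F_le {x : ℝ} (hx : 0 < x) :
    thetaS (π * x) - 2 * thetaS (2 * (π * x))
      ≤ Real.sqrt x⁻¹ * (1 / 2 - Real.sqrt 2⁻¹) + 2 := by
  have h1 : thetaS (π * x) ≤ Real.sqrt (π / (π * x)) / 2 := theta_upper (by positivity)
  have h2 : Real.sqrt (π / (2 * (π * x))) / 2 - 1 ≤ thetaS (2 * (π * x)) :=
    theta_lower (by positivity)
  have e1 : π / (π * x) = x⁻¹ := by
    field_simp
  have e2 : π / (2 * (π * x)) = 2⁻¹ * x⁻¹ := by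
    have hpi := Real.pi_pos
    field_simp
  rw [e1] at h1
  rw [e2, Real.sqrt_mul (by norm_num) x⁻¹] at h2
  nlinarith [h1, h2]

lemma g_tendsto :
    Tendsto (fun x : ℝ => Real.sqrt x⁻¹ * (1 / 2 - Real.sqrt 2⁻¹) + 2)
      (𝓝[>] (0 : ℝ)) atBot := by
  have hc : (1 / 2 - Real.sqrt 2⁻¹ : ℝ) < 0 := by
    have : (1 / 2 : ℝ) < Real.sqrt 2⁻¹ :=
      Real.lt_sqrt_of_sq_lt (by norm_num)
    linarith
  have hsq : Tendsto (fun x : ℝ => Real.sqrt x⁻¹) (𝓝[>] (0 : ℝ)) atTop := by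
    have h1 : Tendsto (fun x : ℝ => (x⁻¹) ^ (1 / 2 : ℝ)) (𝓝[>] (0 : ℝ)) atTop :=
      (tendsto_rpow_atTop (by norm_num)).comp tendsto_inv_nhdsGT_zero
    refine h1.congr fun x => ?_
    rw [Real.sqrt_eq_rpow]
  exact tendsto_atBot_add_const_right _ 2 (hsq.atTop_mul_const_of_neg hc)

theorem liouville_weighted_mean_negative :
    (∃ x₀ : ℝ, 0 < x₀ ∧ ∀ x : ℝ, 0 < x → x < x₀ →
      (∑' n : ℕ, (liouville (n + 1) : ℝ) / (Real.exp (((n : ℝ) + 1) * π * x) + 1)) < 0) ∧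
    Tendsto (fun x : ℝ => ∑' n : ℕ,
        (liouville (n + 1) : ℝ) / (Real.exp (((n : ℝ) + 1) * π * x) + 1))
      (nhdsWithin 0 (Set.Ioi 0)) atBot := by
  have key : Tendsto (fun x : ℝ => ∑' n : ℕ,
      (liouville (n + 1) : ℝ) / (Real.exp (((n : ℝ) + 1) * π * x) + 1))
      (𝓝[>] (0 : ℝ)) atBot := by
    refine tendsto_atBot_mono' _ ?_ g_tendsto
    filter_upwards [eventually_mem_nhdsWithin] with x hx
    rw [(F_hasSum hx).tsum_eq]
    exact F_le hx
  refine ⟨?_, key⟩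
  have hev : ∀ᶠ x in 𝓝[>] (0 : ℝ),
      (∑' n : ℕ, (liouville (n + 1) : ℝ) / (Real.exp (((n : ℝ) + 1) * π * x) + 1)) < 0 :=
    key.eventually (eventually_lt_atBot 0)
  rw [eventually_iff, mem_nhdsGT_iff_exists_Ioo_subset] at hev
  obtain ⟨u, hu, hsub⟩ := hev
  exact ⟨u, hu, fun x h1 h2 => hsub ⟨h1, h2⟩⟩

end Part4
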